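/- Let δρ and δφ be C¹ functions satisfying the linearized system δρ_t + δφ_x = 0 and δφ_t + σ² δρ_x = λ₁(x) δρ − λ₂(x) δφ, where λ₁(x) = λ φ_L²/(2D ρ⋆(x)²) and λ₂(x) = λ φ_L/(D ρ⋆(x)). Then the Riemann-type variables v(t, (ℓ−x)/ℓ) = sqrt(ρ⋆(x)/ρ⋆(ℓ)) e^{(σ/φ_L)(ρ⋆(x)−ρ⋆(ℓ))} ((1/2)δρ − (1/(2σ))δφ) and w(t, (ℓ−x)/ℓ) = sqrt(ρ⋆(x)/ρ⋆(ℓ)) e^{−(σ/φ_L)(ρ⋆(x)−ρ⋆(ℓ))} ((1/2)δρ + (1/(2σ))δφ) satisfy the canonical hyperbolic system v_t + (σ/ℓ) v_x̄ = −μ₁(x̄) w and w_t − (σ/ℓ) w_x̄ = μ₂(x̄) v on x̄ ∈ (0,1), where μ₁(x̄) = [λφ_L²/(4σD ρ⋆(ℓ(1−x̄))²) − λφ_L/(2D ρ⋆(ℓ(1−x̄)))] e^{(2σ/φ_L)(ρ⋆(ℓ(1−x̄))−ρ⋆(ℓ))} and μ₂(x̄) = [λφ_L²/(4σD ρ⋆(ℓ(1−x̄))²)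 + λφ_L/(2D ρ⋆(ℓ(1−x̄)))] e^{−(2σ/φ_L)(ρ⋆(ℓ(1−x̄))−ρ⋆(ℓ))}. -/

import Mathlib

open Real Set

set_option maxHeartbeats 1000000 in
/-- Riemann-type change of variables transforms the linearized gas flow system
into the canonical `2×2` hyperbolic system
`v_t + (σ/ℓ) v_x̄ = −μ₁(x̄) w`, `w_t − (σ/ℓ) w_x̄ = μ₂(x̄) v`. -/
theorem canonical_form_transformation
    (lam D σ ℓ φL Ustar : ℝ)
    (hlam : 0 < lam) (hD : 0 < D) (hσ : 0 < σ) (hℓ : 0 < ℓ) (hφL : 0 < φL)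
    (hUpos : 0 < Ustar) (hU : lam * φL ^ 2 * ℓ / (σ ^ 2 * D) < Ustar ^ 2)
    (ρs : ℝ → ℝ)
    (hρs : ∀ x, ρs x = Real.sqrt (Ustar ^ 2 - lam * φL ^ 2 / (σ ^ 2 * D) * x))
    (lam1 lam2 : ℝ → ℝ)
    (hlam1 : ∀ x, lam1 x = lam * φL ^ 2 / (2 * D * (ρs x) ^ 2))
    (hlam2 : ∀ x, lam2 x = lam * φL / (D * ρs x))
    (μ1 μ2 : ℝ → ℝ)
    (hμ1 : ∀ y, μ1 y =
      (lam * φL ^ 2 / (4 * σ * D * (ρs (ℓ * (1 - y))) ^ 2)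
        - lam * φL / (2 * D * ρs (ℓ * (1 - y))))
        * Real.exp ((2 * σ / φL) * (ρs (ℓ * (1 - y)) - ρs ℓ)))
    (hμ2 : ∀ y, μ2 y =
      (lam * φL ^ 2 / (4 * σ * D * (ρs (ℓ * (1 - y))) ^ 2)
        + lam * φL / (2 * D * ρs (ℓ * (1 - y))))
        * Real.exp (-(2 * σ / φL) * (ρs (ℓ * (1 - y)) - ρs ℓ)))
    (δρ δφ : ℝ → ℝ → ℝ)
    (hC1ρ : ContDiff ℝ 1 (fun p : ℝ × ℝ => δρ p.1 p.2))
    (hC1φ : ContDiff ℝ 1 (fun p : ℝ × ℝ => δφ p.1 p.2))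
    -- the linearized system: δρ_t + δφ_x = 0, δφ_t + σ² δρ_x = λ₁ δρ − λ₂ δφ
    (hPDE : ∀ t > (0 : ℝ), ∀ x ∈ Set.Ioo 0 ℓ,
      ∃ ρt ρx φt φx : ℝ,
        HasDerivAt (fun τ => δρ τ x) ρt t ∧ HasDerivAt (fun y => δρ t y) ρx x ∧
        HasDerivAt (fun τ => δφ τ x) φt t ∧ HasDerivAt (fun y => δφ t y) φx x ∧
        ρt + φx = 0 ∧
        φt + σ ^ 2 * ρx = lam1 x * δρ t x - lam2 x * δφ t x)
    (v w : ℝ → ℝ → ℝ)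
    (hv : ∀ t x, v t ((ℓ - x) / ℓ) =
      Real.sqrt (ρs x / ρs ℓ) * Real.exp ((σ / φL) * (ρs x - ρs ℓ))
        * ((1 / 2) * δρ t x - (1 / (2 * σ)) * δφ t x))
    (hw : ∀ t x, w t ((ℓ - x) / ℓ) =
      Real.sqrt (ρs x / ρs ℓ) * Real.exp (-(σ / φL) * (ρs x - ρs ℓ))
        * ((1 / 2) * δρ t x + (1 / (2 * σ)) * δφ t x)) :
    ∀ t > (0 : ℝ), ∀ y ∈ Set.Ioo (0 : ℝ) 1,
      ∃ vt vx wt wx : ℝ,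
        HasDerivAt (fun τ => v τ y) vt t ∧ HasDerivAt (fun z => v t z) vx y ∧
        HasDerivAt (fun τ => w τ y) wt t ∧ HasDerivAt (fun z => w t z) wx y ∧
        vt + (σ / ℓ) * vx = -μ1 y * w t y ∧
        wt - (σ / ℓ) * wx = μ2 y * v t y := by
  intro t ht y hy
  obtain ⟨hy0, hy1⟩ := hy
  have hℓne : ℓ ≠ 0 := ne_of_gt hℓ
  have hσne : σ ≠ 0 := ne_of_gt hσ
  have hDne : D ≠ 0 := ne_of_gt hD
  have hφLne : φL ≠ 0 := ne_of_gt hφL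
  set c := lam * φL ^ 2 / (σ ^ 2 * D) with hcdef
  have hc : 0 < c := by positivity
  set x := ℓ * (1 - y) with hxdef
  have hx0 : 0 < x := mul_pos hℓ (by linarith)
  have hxl : x < ℓ := by rw [hxdef]; nlinarith
  have hyx : (ℓ - x) / ℓ = y := by rw [hxdef]; field_simp; ring
  obtain ⟨ρt, ρx, φt, φx, hρt, hρx, hφt, hφx, e1, e2⟩ := hPDE t ht x ⟨hx0, hxl⟩
  have hcl : c * ℓ = lam * φL ^ 2 * ℓ / (σ ^ 2 * D) := by rw [hcdef]; ring
  have hinl : 0 < Ustar ^ 2 - c * ℓ := by rw [hcl]; linarith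
  have hinx : 0 < Ustar ^ 2 - c * x := by nlinarith
  have hr : 0 < ρs x := by rw [hρs]; exact Real.sqrt_pos.mpr hinx
  have hrl : 0 < ρs ℓ := by rw [hρs]; exact Real.sqrt_pos.mpr hinl
  have hSpos : 0 < Real.sqrt (ρs x / ρs ℓ) := Real.sqrt_pos.mpr (div_pos hr hrl)
  have hS2 : Real.sqrt (ρs x / ρs ℓ) ^ 2 * ρs ℓ = ρs x := by
    rw [Real.sq_sqrt (le_of_lt (div_pos hr hrl))]; field_simp
  -- derivative of ρs at x
  have hinner : HasDerivAt (fun x' : ℝ => Ustar ^ 2 - c * x') (-c) x := by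
    exact (((hasDerivAt_id' x).const_mul c).const_sub (Ustar ^ 2)).congr_deriv (by ring)
  have hρsd : HasDerivAt ρs (-c / (2 * ρs x)) x := by
    have h2 : HasDerivAt (fun x' => Real.sqrt (Ustar ^ 2 - c * x'))
        (1 / (2 * Real.sqrt (Ustar ^ 2 - c * x)) * -c) x :=
      (Real.hasDerivAt_sqrt (ne_of_gt hinx)).comp x hinner
    have hfe : ρs = fun x' => Real.sqrt (Ustar ^ 2 - c * x') := funext hρs
    rw [hρs x, hfe]
    convert h2 using 1
    ring
  -- derivative of the sqrt factor
  have hSd : HasDerivAt (fun x' => Real.sqrt (ρs x' / ρs ℓ))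
      (Real.sqrt (ρs x / ρs ℓ) * -c / (4 * ρs x ^ 2)) x := by
    have h2 : HasDerivAt (fun x' => Real.sqrt (ρs x' / ρs ℓ))
        (1 / (2 * Real.sqrt (ρs x / ρs ℓ)) * (-c / (2 * ρs x) / ρs ℓ)) x :=
      (Real.hasDerivAt_sqrt (ne_of_gt (div_pos hr hrl))).comp x (hρsd.div_const _)
    convert h2 using 1
    have hsq1 : Real.sqrt (ρs x) ^ 2 = ρs x := Real.sq_sqrt hr.le
    have hsq2 : Real.sqrt (ρs ℓ) ^ 2 = ρs ℓ := Real.sq_sqrt hrl.le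
    field_simp
    linear_combination (-4) * hS2
  -- derivative of the exp factors
  have hEd : HasDerivAt (fun x' => Real.exp ((σ / φL) * (ρs x' - ρs ℓ)))
      (Real.exp ((σ / φL) * (ρs x - ρs ℓ)) * ((σ / φL) * (-c / (2 * ρs x)))) x :=
    ((hρsd.sub_const (ρs ℓ)).const_mul (σ / φL)).exp
  have hEmd : HasDerivAt (fun x' => Real.exp (-(σ / φL) * (ρs x' - ρs ℓ)))
      (Real.exp (-(σ / φL) * (ρs x - ρs ℓ)) * (-(σ / φL) * (-c / (2 * ρs x)))) x :=
    ((hρsd.sub_const (ρs ℓ)).const_mul (-(σ / φL))).exp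
  -- derivatives of the δ-combinations
  have hHv : HasDerivAt (fun x' => (1 / 2) * δρ t x' - (1 / (2 * σ)) * δφ t x')
      ((1 / 2) * ρx - (1 / (2 * σ)) * φx) x :=
    (hρx.const_mul _).sub (hφx.const_mul _)
  have hHw : HasDerivAt (fun x' => (1 / 2) * δρ t x' + (1 / (2 * σ)) * δφ t x')
      ((1 / 2) * ρx + (1 / (2 * σ)) * φx) x :=
    (hρx.const_mul _).add (hφx.const_mul _)
  have hlin : HasDerivAt (fun z : ℝ => ℓ * (1 - z)) (-ℓ) y := by
    simpa using ((hasDerivAt_id y).const_sub 1).const_mul ℓ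
  -- time derivatives
  have hvtd : HasDerivAt (fun τ => v τ y)
      ((Real.sqrt (ρs x / ρs ℓ) * Real.exp ((σ / φL) * (ρs x - ρs ℓ)))
        * ((1 / 2) * ρt - (1 / (2 * σ)) * φt)) t := by
    have h := ((hρt.const_mul ((1:ℝ) / 2)).sub (hφt.const_mul ((1:ℝ) / (2 * σ)))).const_mul
      (Real.sqrt (ρs x / ρs ℓ) * Real.exp ((σ / φL) * (ρs x - ρs ℓ)))
    refine HasDerivAt.congr_of_eventuallyEq h (Filter.Eventually.of_forall fun τ => ?_)
    have h2 := hv τ x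
    rw [hyx] at h2
    exact h2
  have hwtd : HasDerivAt (fun τ => w τ y)
      ((Real.sqrt (ρs x / ρs ℓ) * Real.exp (-(σ / φL) * (ρs x - ρs ℓ)))
        * ((1 / 2) * ρt + (1 / (2 * σ)) * φt)) t := by
    have h := ((hρt.const_mul ((1:ℝ) / 2)).add (hφt.const_mul ((1:ℝ) / (2 * σ)))).const_mul
      (Real.sqrt (ρs x / ρs ℓ) * Real.exp (-(σ / φL) * (ρs x - ρs ℓ)))
    refine HasDerivAt.congr_of_eventuallyEq h (Filter.Eventually.of_forall fun τ => ?_)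
    have h2 := hw τ x
    rw [hyx] at h2
    exact h2
  -- spatial derivatives
  have hvxd : HasDerivAt (fun z => v t z)
      (((Real.sqrt (ρs x / ρs ℓ) * -c / (4 * ρs x ^ 2)
            * Real.exp ((σ / φL) * (ρs x - ρs ℓ))
          + Real.sqrt (ρs x / ρs ℓ)
            * (Real.exp ((σ / φL) * (ρs x - ρs ℓ)) * ((σ / φL) * (-c / (2 * ρs x)))))
          * ((1 / 2) * δρ t x - (1 / (2 * σ)) * δφ t x)
        + Real.sqrt (ρs x / ρs ℓ) * Real.exp ((σ / φL) * (ρs x - ρs ℓ))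
          * ((1 / 2) * ρx - (1 / (2 * σ)) * φx)) * -ℓ) y := by
    have hcomp := ((hSd.mul hEd).mul hHv).comp y hlin
    refine HasDerivAt.congr_of_eventuallyEq hcomp (Filter.Eventually.of_forall fun z => ?_)
    simp only [Function.comp_apply]
    have h2 := hv t (ℓ * (1 - z))
    rw [show (ℓ - ℓ * (1 - z)) / ℓ = z by field_simp; ring] at h2
    exact h2
  have hwxd : HasDerivAt (fun z => w t z)
      (((Real.sqrt (ρs x / ρs ℓ) * -c / (4 * ρs x ^ 2)
            * Real.exp (-(σ / φL) * (ρs x - ρs ℓ))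
          + Real.sqrt (ρs x / ρs ℓ)
            * (Real.exp (-(σ / φL) * (ρs x - ρs ℓ)) * (-(σ / φL) * (-c / (2 * ρs x)))))
          * ((1 / 2) * δρ t x + (1 / (2 * σ)) * δφ t x)
        + Real.sqrt (ρs x / ρs ℓ) * Real.exp (-(σ / φL) * (ρs x - ρs ℓ))
          * ((1 / 2) * ρx + (1 / (2 * σ)) * φx)) * -ℓ) y := by
    have hcomp := ((hSd.mul hEmd).mul hHw).comp y hlin
    refine HasDerivAt.congr_of_eventuallyEq hcomp (Filter.Eventually.of_forall fun z => ?_)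
    simp only [Function.comp_apply]
    have h2 := hw t (ℓ * (1 - z))
    rw [show (ℓ - ℓ * (1 - z)) / ℓ = z by field_simp; ring] at h2
    exact h2
  clear_value x
  refine ⟨_, _, _, _, hvtd, hvxd, hwtd, hwxd, ?_, ?_⟩
  · -- first equation
    have eρt : ρt = -φx := by linarith
    have eφt : φt = lam * φL ^ 2 / (2 * D * ρs x ^ 2) * δρ t x
        - lam * φL / (D * ρs x) * δφ t x - σ ^ 2 * ρx := by
      rw [hlam1, hlam2] at e2; linarith
    have hwy := hw t x
    rw [hyx] at hwy
    rw [eρt, eφt, hμ1 y, ← hxdef, hwy]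
    rw [show (2 * σ / φL) * (ρs x - ρs ℓ) = (σ / φL) * (ρs x - ρs ℓ) + (σ / φL) * (ρs x - ρs ℓ)
        by ring, Real.exp_add]
    rw [show -(σ / φL) * (ρs x - ρs ℓ) = -((σ / φL) * (ρs x - ρs ℓ)) by ring, Real.exp_neg]
    rw [hcdef]
    have hE : Real.exp ((σ / φL) * (ρs x - ρs ℓ)) ≠ 0 := Real.exp_ne_zero _
    generalize hEg : Real.exp (σ / φL * (ρs x - ρs ℓ)) = E at hE ⊢
    generalize hSg : Real.sqrt (ρs x / ρs ℓ) = S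
    generalize hrg : ρs x = r at hr ⊢
    generalize δρ t x = a
    generalize δφ t x = b
    have hrne : r ≠ 0 := ne_of_gt hr
    clear_value c
    clear * - hσne hDne hφLne hℓne hE hrne
    field_simp
    ring
  · -- second equation
    have eρt : ρt = -φx := by linarith
    have eφt : φt = lam * φL ^ 2 / (2 * D * ρs x ^ 2) * δρ t x
        - lam * φL / (D * ρs x) * δφ t x - σ ^ 2 * ρx := by
      rw [hlam1, hlam2] at e2; linarith
    have hvy := hv t x
    rw [hyx] at hvy
    rw [eρt, eφt, hμ2 y, ← hxdef, hvy]
    rw [show -(2 * σ / φL) * (ρs x - ρs ℓ)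
        = -((σ / φL) * (ρs x - ρs ℓ) + (σ / φL) * (ρs x - ρs ℓ)) by ring,
      Real.exp_neg, Real.exp_add]
    rw [show -(σ / φL) * (ρs x - ρs ℓ) = -((σ / φL) * (ρs x - ρs ℓ)) by ring, Real.exp_neg]
    rw [hcdef]
    have hE : Real.exp ((σ / φL) * (ρs x - ρs ℓ)) ≠ 0 := Real.exp_ne_zero _
    generalize hEg : Real.exp (σ / φL * (ρs x - ρs ℓ)) = E at hE ⊢
    generalize hSg : Real.sqrt (ρs x / ρs ℓ) = S
    generalize hrg : ρs x = r at hr ⊢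
    generalize δρ t x = a
    generalize δφ t x = b
    have hrne : r ≠ 0 := ne_of_gt hr
    clear_value c
    clear * - hσne hDne hφLne hℓne hE hrne
    field_simp
    ring
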